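/- Fix a real number a with 0 < a < 1/√2 and set t₋ := (a^2/(1−a^2))^{1/6}. For every t ∈ (0, t₋), with ã₊(t), ã₋(t), C(t), z(t) as defined in the context, the following two identities hold: C(t)^2·(z(t)^2 − 1) = −1, and i·C(t)^3·(t^3 + t^{−3})·(z(t)^2 − 1)·(z(t)^2 − a^2) = 2·z(t). -/

import Mathlib

open Complex

/-- `ã₊(t) := √((1−a²) − a²t⁶)`. -/
noncomputable def aPlus (a t : ℝ) : ℝ := Real.sqrt ((1 - a ^ 2) - a ^ 2 * t ^ 6)

/-- `ã₋(t) := √(a²t⁻⁶ − (1−a²))`. -/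
noncomputable def aMinus (a t : ℝ) : ℝ := Real.sqrt (a ^ 2 / t ^ 6 - (1 - a ^ 2))

/-- `C(t) := (ã₊(t) + i t⁶ ã₋(t)) / ((1−a²)(1+t⁶))`. -/
noncomputable def Cparam (a t : ℝ) : ℂ :=
  ((aPlus a t : ℂ) + Complex.I * (t : ℂ) ^ 6 * (aMinus a t : ℂ))
    / (((1 - a ^ 2 : ℝ) : ℂ) * (1 + (t : ℂ) ^ 6))

/-- `z(t) := (t³/(1−t⁶))(ã₋(t) + i ã₊(t))`. -/
noncomputable def zparam (a t : ℝ) : ℂ :=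
  ((t : ℂ) ^ 3 / (1 - (t : ℂ) ^ 6)) * ((aMinus a t : ℂ) + Complex.I * (aPlus a t : ℂ))

lemma key1 (a t p m : ℂ) (hp : p^2 = (1-a^2) - a^2*t^6)
    (hm : m^2*t^6 = a^2 - (1-a^2)*t^6) :
    (p + Complex.I * t ^ 6 * m) ^ 2 * ((t ^ 3 * (m + Complex.I * p)) ^ 2 - (1 - t ^ 6) ^ 2) =
      -(((1 - a ^ 2) * (1 + t ^ 6)) ^ 2 * (1 - t ^ 6) ^ 2) := by
  have hI : Complex.I^2 + 1 = 0 := by simp [Complex.I_sq]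
  linear_combination ((-1)*m^2*t^12 + (2)*m^2*t^18 + (-1)*m^2*t^24 + (1)*m^4*t^18 + (2)*p*m^3*t^18*Complex.I + (4)*p^2*m^2*t^12 + (-1)*p^2*m^2*t^18 + (1)*p^2*m^2*t^18*Complex.I^2 + (2)*p^3*m*t^12*Complex.I + (1)*p^4*t^6) * hI + ((-1) + (1)*t^6 + (-1)*t^12 + (1)*a^2*t^6 + (1)*a^2*t^12 + (1)*m^2*t^6 + (-4)*m^2*t^12 + (1)*m^2*t^18 + (2)*p*m*t^6*Complex.I + (-2)*p*m*t^12*Complex.I + (-1)*p^2*t^6) * hp + ((1) + (-3)*t^6 + (1)*t^18 + (-1)*a^2 + (2)*a^2*t^6 + (2)*a^2*t^12 + (-1)*a^2*t^18 + (-1)*m^2*t^12 + (2)*p*m*t^6*Complex.I + (-2)*p*m*t^12*Complex.I) * hm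

lemma key2 (a t p m : ℂ) (hp : p^2 = (1-a^2) - a^2*t^6)
    (hm : m^2*t^6 = a^2 - (1-a^2)*t^6) :
    Complex.I * (p + Complex.I * t ^ 6 * m) ^ 3 * (t ^ 3 * t ^ 3 + 1) *
          ((t ^ 3 * (m + Complex.I * p)) ^ 2 - (1 - t ^ 6) ^ 2) *
        ((t ^ 3 * (m + Complex.I * p)) ^ 2 - (1 - t ^ 6) ^ 2 * a ^ 2) * (1 - t ^ 6) =
      2 * (t ^ 3 * (m + Complex.I * p)) *
        (((1 - a ^ 2) * (1 + t ^ 6)) ^ 3 * t ^ 3 * (1 - t ^ 6) ^ 2 * (1 - t ^ 6) ^ 2) := by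
  have hI : Complex.I^2 + 1 = 0 := by simp [Complex.I_sq]
  linear_combination ((-1)*m^3*a^2*t^18 + (1)*m^3*a^2*t^18*Complex.I^2 + (4)*m^3*a^2*t^24 + (-4)*m^3*a^2*t^24*Complex.I^2 + (-5)*m^3*a^2*t^30 + (5)*m^3*a^2*t^30*Complex.I^2 + (5)*m^3*a^2*t^42 + (-5)*m^3*a^2*t^42*Complex.I^2 + (-4)*m^3*a^2*t^48 + (4)*m^3*a^2*t^48*Complex.I^2 + (1)*m^3*a^2*t^54 + (-1)*m^3*a^2*t^54*Complex.I^2 + (1)*m^5*t^24 + (-1)*m^5*t^24*Complex.I^2 + (-2)*m^5*t^30 + (2)*m^5*t^30*Complex.I^2 + (2)*m^5*t^42 + (-2)*m^5*t^42*Complex.I^2 + (-1)*m^5*t^48 + (1)*m^5*t^48*Complex.I^2 + (1)*m^5*a^2*t^24 + (-1)*m^5*a^2*t^24*Complex.I^2 + (-2)*m^5*a^2*t^30 + (2)*m^5*a^2*t^30*Complex.I^2 + (2)*m^5*a^2*t^42 + (-2)*m^5*a^2*t^42*Complex.I^2 + (-1)*m^5*a^2*t^48 + (1)*m^5*a^2*t^48*Complex.I^2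 + (-1)*m^7*t^30 + (1)*m^7*t^30*Complex.I^2 + (1)*m^7*t^42 + (-1)*m^7*t^42*Complex.I^2 + (3)*p*m^2*a^2*t^12*Complex.I + (-12)*p*m^2*a^2*t^18*Complex.I + (15)*p*m^2*a^2*t^24*Complex.I + (-15)*p*m^2*a^2*t^36*Complex.I + (12)*p*m^2*a^2*t^42*Complex.I + (-3)*p*m^2*a^2*t^48*Complex.I + (-3)*p*m^4*t^18*Complex.I + (8)*p*m^4*t^24*Complex.I + (-2)*p*m^4*t^24*Complex.I^3 + (-4)*p*m^4*t^30*Complex.I + (4)*p*m^4*t^30*Complex.I^3 + (-6)*p*m^4*t^36*Complex.I + (7)*p*m^4*t^42*Complex.I + (-4)*p*m^4*t^42*Complex.I^3 + (-2)*p*m^4*t^48*Complex.I + (2)*p*m^4*t^48*Complex.I^3 + (-3)*p*m^4*a^2*t^18*Complex.I + (8)*p*m^4*a^2*t^24*Complex.I + (-2)*p*m^4*a^2*t^24*Complex.I^3 + (-4)*p*m^4*a^2*t^30*Complex.I + (4)*p*m^4*a^2*t^30*Complex.I^3 + (-6)*p*m^4*a^2*t^36*Complex.I + (7)*p*m^4*a^2*t^42*Complex.I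 + (-4)*p*m^4*a^2*t^42*Complex.I^3 + (-2)*p*m^4*a^2*t^48*Complex.I + (2)*p*m^4*a^2*t^48*Complex.I^3 + (3)*p*m^6*t^24*Complex.I + (-4)*p*m^6*t^30*Complex.I + (4)*p*m^6*t^30*Complex.I^3 + (-3)*p*m^6*t^36*Complex.I + (4)*p*m^6*t^42*Complex.I + (-4)*p*m^6*t^42*Complex.I^3 + (3)*p^2*m*a^2*t^6 + (-12)*p^2*m*a^2*t^12 + (15)*p^2*m*a^2*t^18 + (-15)*p^2*m*a^2*t^30 + (12)*p^2*m*a^2*t^36 + (-3)*p^2*m*a^2*t^42 + (-3)*p^2*m^3*t^12 + (12)*p^2*m^3*t^18 + (-6)*p^2*m^3*t^18*Complex.I^2 + (-13)*p^2*m^3*t^24 + (13)*p^2*m^3*t^24*Complex.I^2 + (-1)*p^2*m^3*t^24*Complex.I^4 + (-4)*p^2*m^3*t^30 + (-2)*p^2*m^3*t^30*Complex.I^2 + (2)*p^2*m^3*t^30*Complex.I^4 + (15)*p^2*m^3*t^36 + (-12)*p^2*m^3*t^36*Complex.I^2 + (-8)*p^2*m^3*t^42 + (8)*p^2*m^3*t^42*Complex.I^2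 + (-2)*p^2*m^3*t^42*Complex.I^4 + (1)*p^2*m^3*t^48 + (-1)*p^2*m^3*t^48*Complex.I^2 + (1)*p^2*m^3*t^48*Complex.I^4 + (-3)*p^2*m^3*a^2*t^12 + (12)*p^2*m^3*a^2*t^18 + (-6)*p^2*m^3*a^2*t^18*Complex.I^2 + (-13)*p^2*m^3*a^2*t^24 + (13)*p^2*m^3*a^2*t^24*Complex.I^2 + (-1)*p^2*m^3*a^2*t^24*Complex.I^4 + (-4)*p^2*m^3*a^2*t^30 + (-2)*p^2*m^3*a^2*t^30*Complex.I^2 + (2)*p^2*m^3*a^2*t^30*Complex.I^4 + (15)*p^2*m^3*a^2*t^36 + (-12)*p^2*m^3*a^2*t^36*Complex.I^2 + (-8)*p^2*m^3*a^2*t^42 + (8)*p^2*m^3*a^2*t^42*Complex.I^2 + (-2)*p^2*m^3*a^2*t^42*Complex.I^4 + (1)*p^2*m^3*a^2*t^48 + (-1)*p^2*m^3*a^2*t^48*Complex.I^2 + (1)*p^2*m^3*a^2*t^48*Complex.I^4 + (3)*p^2*m^5*t^18 + (-12)*p^2*m^5*t^24 + (12)*p^2*m^5*t^24*Complex.I^2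 + (3)*p^2*m^5*t^30 + (-6)*p^2*m^5*t^30*Complex.I^2 + (6)*p^2*m^5*t^30*Complex.I^4 + (12)*p^2*m^5*t^36 + (-12)*p^2*m^5*t^36*Complex.I^2 + (-6)*p^2*m^5*t^42 + (6)*p^2*m^5*t^42*Complex.I^2 + (-6)*p^2*m^5*t^42*Complex.I^4 + (-6)*p^3*m^2*t^12*Complex.I + (15)*p^3*m^2*t^18*Complex.I + (-3)*p^3*m^2*t^18*Complex.I^3 + (-6)*p^3*m^2*t^24*Complex.I + (6)*p^3*m^2*t^24*Complex.I^3 + (-12)*p^3*m^2*t^30*Complex.I + (12)*p^3*m^2*t^36*Complex.I + (-6)*p^3*m^2*t^36*Complex.I^3 + (-3)*p^3*m^2*t^42*Complex.I + (3)*p^3*m^2*t^42*Complex.I^3 + (-6)*p^3*m^2*a^2*t^12*Complex.I + (15)*p^3*m^2*a^2*t^18*Complex.I + (-3)*p^3*m^2*a^2*t^18*Complex.I^3 + (-6)*p^3*m^2*a^2*t^24*Complex.I + (6)*p^3*m^2*a^2*t^24*Complex.I^3 + (-12)*p^3*m^2*a^2*t^30*Complex.I + (12)*p^3*m^2*a^2*t^36*Complex.I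 + (-6)*p^3*m^2*a^2*t^36*Complex.I^3 + (-3)*p^3*m^2*a^2*t^42*Complex.I + (3)*p^3*m^2*a^2*t^42*Complex.I^3 + (12)*p^3*m^4*t^18*Complex.I + (-18)*p^3*m^4*t^24*Complex.I + (18)*p^3*m^4*t^24*Complex.I^3 + (-8)*p^3*m^4*t^30*Complex.I + (-4)*p^3*m^4*t^30*Complex.I^3 + (4)*p^3*m^4*t^30*Complex.I^5 + (18)*p^3*m^4*t^36*Complex.I + (-18)*p^3*m^4*t^36*Complex.I^3 + (-4)*p^3*m^4*t^42*Complex.I + (4)*p^3*m^4*t^42*Complex.I^3 + (-4)*p^3*m^4*t^42*Complex.I^5 + (-2)*p^4*m*t^6 + (7)*p^4*m*t^12 + (-3)*p^4*m*t^12*Complex.I^2 + (-6)*p^4*m*t^18 + (6)*p^4*m*t^18*Complex.I^2 + (-4)*p^4*m*t^24 + (8)*p^4*m*t^30 + (-6)*p^4*m*t^30*Complex.I^2 + (-3)*p^4*m*t^36 + (3)*p^4*m*t^36*Complex.I^2 + (-2)*p^4*m*a^2*t^6 + (7)*p^4*m*a^2*t^12 + (-3)*p^4*m*a^2*t^12*Complex.I^2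 + (-6)*p^4*m*a^2*t^18 + (6)*p^4*m*a^2*t^18*Complex.I^2 + (-4)*p^4*m*a^2*t^24 + (8)*p^4*m*a^2*t^30 + (-6)*p^4*m*a^2*t^30*Complex.I^2 + (-3)*p^4*m*a^2*t^36 + (3)*p^4*m*a^2*t^36*Complex.I^2 + (4)*p^4*m^3*t^12 + (-18)*p^4*m^3*t^18 + (18)*p^4*m^3*t^18*Complex.I^2 + (8)*p^4*m^3*t^24 + (-12)*p^4*m^3*t^24*Complex.I^2 + (12)*p^4*m^3*t^24*Complex.I^4 + (17)*p^4*m^3*t^30 + (-17)*p^4*m^3*t^30*Complex.I^2 + (-1)*p^4*m^3*t^30*Complex.I^4 + (1)*p^4*m^3*t^30*Complex.I^6 + (-12)*p^4*m^3*t^36 + (12)*p^4*m^3*t^36*Complex.I^2 + (-12)*p^4*m^3*t^36*Complex.I^4 + (1)*p^4*m^3*t^42 + (-1)*p^4*m^3*t^42*Complex.I^2 + (1)*p^4*m^3*t^42*Complex.I^4 + (-1)*p^4*m^3*t^42*Complex.I^6 + (-1)*p^5*t^6*Complex.I + (2)*p^5*t^12*Complex.I + (-2)*p^5*t^24*Complex.I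 + (1)*p^5*t^30*Complex.I + (-1)*p^5*a^2*t^6*Complex.I + (2)*p^5*a^2*t^12*Complex.I + (-2)*p^5*a^2*t^24*Complex.I + (1)*p^5*a^2*t^30*Complex.I + (6)*p^5*m^2*t^12*Complex.I + (-12)*p^5*m^2*t^18*Complex.I + (12)*p^5*m^2*t^18*Complex.I^3 + (-3)*p^5*m^2*t^24*Complex.I + (-3)*p^5*m^2*t^24*Complex.I^3 + (3)*p^5*m^2*t^24*Complex.I^5 + (12)*p^5*m^2*t^30*Complex.I + (-12)*p^5*m^2*t^30*Complex.I^3 + (-3)*p^5*m^2*t^36*Complex.I + (3)*p^5*m^2*t^36*Complex.I^3 + (-3)*p^5*m^2*t^36*Complex.I^5 + (-4)*p^6*m*t^12 + (4)*p^6*m*t^12*Complex.I^2 + (3)*p^6*m*t^18 + (-3)*p^6*m*t^18*Complex.I^2 + (3)*p^6*m*t^18*Complex.I^4 + (4)*p^6*m*t^24 + (-4)*p^6*m*t^24*Complex.I^2 + (-3)*p^6*m*t^30 + (3)*p^6*m*t^30*Complex.I^2 + (-3)*p^6*m*t^30*Complex.I^4 + (-1)*p^7*t^12*Complex.I + (1)*p^7*t^12*Complex.I^3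 + (1)*p^7*t^24*Complex.I + (-1)*p^7*t^24*Complex.I^3) * hI + ((2)*m*t^6 + (-3)*m*t^12 + (3)*m*t^18 + (-5)*m*t^30 + (3)*m*t^36 + (-3)*m*a^2*t^6 + (2)*m*a^2*t^12 + (-10)*m*a^2*t^18 + (8)*m*a^2*t^24 + (13)*m*a^2*t^30 + (-10)*m*a^2*t^36 + (-2)*m*a^4*t^6 + (9)*m*a^4*t^12 + (6)*m*a^4*t^18 + (-16)*m*a^4*t^24 + (-4)*m*a^4*t^30 + (7)*m*a^4*t^36 + (-1)*m^3*t^12 + (6)*m^3*t^18 + (5)*m^3*t^24 + (-13)*m^3*t^30 + (-3)*m^3*t^36 + (7)*m^3*t^42 + (-1)*m^3*t^48 + (7)*m^3*a^2*t^12 + (-26)*m^3*a^2*t^18 + (3)*m^3*a^2*t^24 + (29)*m^3*a^2*t^30 + (-10)*m^3*a^2*t^36 + (-3)*m^3*a^2*t^42 + (-3)*m^5*t^18 + (12)*m^5*t^24 + (-3)*m^5*t^30 + (-12)*m^5*t^36 + (6)*m^5*t^42 + (1)*p*t^6*Complex.I + (-1)*p*t^12*Complex.I + (1)*p*t^24*Complex.I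 + (-1)*p*t^30*Complex.I + (1)*p*a^2*Complex.I + (-4)*p*a^2*t^6*Complex.I + (2)*p*a^2*t^12*Complex.I + (-3)*p*a^2*t^24*Complex.I + (4)*p*a^2*t^30*Complex.I + (-1)*p*a^4*t^6*Complex.I + (2)*p*a^4*t^12*Complex.I + (4)*p*a^4*t^18*Complex.I + (-2)*p*a^4*t^24*Complex.I + (-3)*p*a^4*t^30*Complex.I + (-1)*p*m^2*t^6*Complex.I + (2)*p*m^2*t^12*Complex.I + (-3)*p*m^2*t^18*Complex.I + (7)*p*m^2*t^24*Complex.I + (1)*p*m^2*t^30*Complex.I + (-9)*p*m^2*t^36*Complex.I + (3)*p*m^2*t^42*Complex.I + (-1)*p*m^2*a^2*t^6*Complex.I + (14)*p*m^2*a^2*t^12*Complex.I + (-21)*p*m^2*a^2*t^18*Complex.I + (-11)*p*m^2*a^2*t^24*Complex.I + (22)*p*m^2*a^2*t^30*Complex.I + (-3)*p*m^2*a^2*t^36*Complex.I + (1)*p*m^4*t^12*Complex.I + (-12)*p*m^4*t^18*Complex.I + (17)*p*m^4*t^24*Complex.I + (8)*p*m^4*t^30*Complex.I + (-18)*p*m^4*t^36*Complex.I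 + (4)*p*m^4*t^42*Complex.I + (2)*p^2*m*t^6 + (-3)*p^2*m*t^12 + (3)*p^2*m*t^18 + (-5)*p^2*m*t^30 + (3)*p^2*m*t^36 + (2)*p^2*m*a^2*t^6 + (-11)*p^2*m*a^2*t^12 + (5)*p^2*m*a^2*t^18 + (11)*p^2*m*a^2*t^24 + (-7)*p^2*m*a^2*t^30 + (-4)*p^2*m^3*t^12 + (18)*p^2*m^3*t^18 + (-8)*p^2*m^3*t^24 + (-17)*p^2*m^3*t^30 + (12)*p^2*m^3*t^36 + (-1)*p^2*m^3*t^42 + (1)*p^3*t^6*Complex.I + (-1)*p^3*t^12*Complex.I + (1)*p^3*t^24*Complex.I + (-1)*p^3*t^30*Complex.I + (1)*p^3*a^2*t^6*Complex.I + (-3)*p^3*a^2*t^12*Complex.I + (-1)*p^3*a^2*t^18*Complex.I + (3)*p^3*a^2*t^24*Complex.I + (-6)*p^3*m^2*t^12*Complex.I + (12)*p^3*m^2*t^18*Complex.I + (3)*p^3*m^2*t^24*Complex.I + (-12)*p^3*m^2*t^30*Complex.I + (3)*p^3*m^2*t^36*Complex.I + (4)*p^4*m*t^12 + (-3)*p^4*m*t^18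 + (-4)*p^4*m*t^24 + (3)*p^4*m*t^30 + (1)*p^5*t^12*Complex.I + (-1)*p^5*t^24*Complex.I) * hp + ((-1)*m*t^6 + (9)*m*t^12 + (-6)*m*t^18 + (-11)*m*t^24 + (9)*m*t^30 + (2)*m*t^36 + (-2)*m*t^42 + (5)*m*a^2*t^6 + (-25)*m*a^2*t^12 + (6)*m*a^2*t^18 + (34)*m*a^2*t^24 + (-15)*m*a^2*t^30 + (-9)*m*a^2*t^36 + (4)*m*a^2*t^42 + (-4)*m*a^4*t^6 + (13)*m*a^4*t^12 + (8)*m*a^4*t^18 + (-24)*m*a^4*t^24 + (-2)*m*a^4*t^30 + (11)*m*a^4*t^36 + (-2)*m*a^4*t^42 + (-3)*m^3*t^12 + (11)*m^3*t^18 + (-2)*m^3*t^24 + (-12)*m^3*t^30 + (5)*m^3*t^36 + (1)*m^3*t^42 + (3)*m^3*a^2*t^12 + (-9)*m^3*a^2*t^18 + (-6)*m^3*a^2*t^24 + (14)*m^3*a^2*t^30 + (3)*m^3*a^2*t^36 + (-5)*m^3*a^2*t^42 + (1)*m^5*t^24 + (-1)*m^5*t^36 + (-1)*p*Complex.I + (1)*p*t^6*Complex.I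 + (6)*p*t^12*Complex.I + (-5)*p*t^18*Complex.I + (-7)*p*t^24*Complex.I + (6)*p*t^30*Complex.I + (2)*p*t^36*Complex.I + (-2)*p*t^42*Complex.I + (1)*p*a^2*Complex.I + (3)*p*a^2*t^6*Complex.I + (-16)*p*a^2*t^12*Complex.I + (2)*p*a^2*t^18*Complex.I + (21)*p*a^2*t^24*Complex.I + (-9)*p*a^2*t^30*Complex.I + (-6)*p*a^2*t^36*Complex.I + (4)*p*a^2*t^42*Complex.I + (-3)*p*a^4*t^6*Complex.I + (6)*p*a^4*t^12*Complex.I + (6)*p*a^4*t^18*Complex.I + (-10)*p*a^4*t^24*Complex.I + (-1)*p*a^4*t^30*Complex.I + (4)*p*a^4*t^36*Complex.I + (-2)*p*a^4*t^42*Complex.I + (1)*p*m^2*t^6*Complex.I + (-9)*p*m^2*t^12*Complex.I + (12)*p*m^2*t^18*Complex.I + (8)*p*m^2*t^24*Complex.I + (-15)*p*m^2*t^30*Complex.I + (1)*p*m^2*t^36*Complex.I + (2)*p*m^2*t^42*Complex.I + (-1)*p*m^2*a^2*t^6*Complex.I + (11)*p*m^2*a^2*t^12*Complex.I + (-12)*p*m^2*a^2*t^18*Complex.I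 + (-14)*p*m^2*a^2*t^24*Complex.I + (15)*p*m^2*a^2*t^30*Complex.I + (3)*p*m^2*a^2*t^36*Complex.I + (-2)*p*m^2*a^2*t^42*Complex.I + (-3)*p*m^4*t^18*Complex.I + (4)*p*m^4*t^24*Complex.I + (3)*p*m^4*t^30*Complex.I + (-4)*p*m^4*t^36*Complex.I) * hm

lemma main1 (a t p m : ℂ) (hp : p^2 = (1-a^2) - a^2*t^6)
    (hm : m^2*t^6 = a^2 - (1-a^2)*t^6) (ht : t ≠ 0) (h1 : (1:ℂ) - t^6 ≠ 0)
    (h2 : (1:ℂ) + t^6 ≠ 0) (ha : (1:ℂ) - a^2 ≠ 0) :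
    ((p + Complex.I * t^6 * m) / ((1-a^2)*(1+t^6)))^2 *
      ((t^3/(1-t^6) * (m + Complex.I * p))^2 - 1) = -1 := by
  field_simp
  linear_combination key1 a t p m hp hm

lemma main2 (a t p m : ℂ) (hp : p^2 = (1-a^2) - a^2*t^6)
    (hm : m^2*t^6 = a^2 - (1-a^2)*t^6) (ht : t ≠ 0) (h1 : (1:ℂ) - t^6 ≠ 0)
    (h2 : (1:ℂ) + t^6 ≠ 0) (ha : (1:ℂ) - a^2 ≠ 0) :
    Complex.I * ((p + Complex.I * t^6 * m) / ((1-a^2)*(1+t^6)))^3 * (t^3 + 1/t^3)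
      * ((t^3/(1-t^6) * (m + Complex.I * p))^2 - 1)
      * ((t^3/(1-t^6) * (m + Complex.I * p))^2 - a^2)
    = 2 * (t^3/(1-t^6) * (m + Complex.I * p)) := by
  field_simp
  refine mul_right_cancel₀ h1 ?_
  linear_combination key2 a t p m hp hm

set_option maxRecDepth 8000 in
theorem vieta_identities (a : ℝ) (ha0 : 0 < a) (ha1 : a < 1 / Real.sqrt 2)
    (t : ℝ) (ht0 : 0 < t) (ht1 : t < (a ^ 2 / (1 - a ^ 2)) ^ ((1 : ℝ) / 6)) :
    (Cparam a t) ^ 2 * ((zparam a t) ^ 2 - 1) = -1 ∧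
    Complex.I * (Cparam a t) ^ 3 * ((t : ℂ) ^ 3 + 1 / (t : ℂ) ^ 3)
        * ((zparam a t) ^ 2 - 1) * ((zparam a t) ^ 2 - (a : ℂ) ^ 2)
      = 2 * zparam a t := by
  -- basic real estimates
  have ha2 : a ^ 2 < 1 / 2 := by
    have h2 : (0:ℝ) < Real.sqrt 2 := by positivity
    have hs : Real.sqrt 2 ^ 2 = 2 := Real.sq_sqrt (by norm_num)
    have h : a * Real.sqrt 2 < 1 := by
      rw [lt_div_iff₀ h2] at ha1; linarith
    nlinarith
  have ha3 : (0:ℝ) < 1 - a ^ 2 := by linarith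
  have hr : (0:ℝ) < a ^ 2 / (1 - a ^ 2) := by positivity
  have h6 : t ^ 6 < a ^ 2 / (1 - a ^ 2) := by
    have h1 := pow_lt_pow_left₀ ht1 ht0.le (by norm_num : 6 ≠ 0)
    calc t ^ 6 < ((a ^ 2 / (1 - a ^ 2)) ^ ((1:ℝ)/6)) ^ 6 := h1
    _ = a ^ 2 / (1 - a ^ 2) := by
        rw [← Real.rpow_natCast ((a ^ 2 / (1 - a ^ 2)) ^ ((1:ℝ)/6)) 6,
          ← Real.rpow_mul hr.le]
        norm_num
  have ht6 : (0:ℝ) < t ^ 6 := by positivity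
  have h6' : (1 - a ^ 2) * t ^ 6 < a ^ 2 := by
    rw [lt_div_iff₀ ha3] at h6
    linarith [h6]
  have hA : 0 ≤ (1 - a ^ 2) - a ^ 2 * t ^ 6 := by nlinarith
  have hB : 0 ≤ a ^ 2 / t ^ 6 - (1 - a ^ 2) := by
    rw [sub_nonneg, le_div_iff₀ ht6]
    linarith
  have ht61 : t ^ 6 < 1 := by
    have : a ^ 2 / (1 - a ^ 2) < 1 := by
      rw [div_lt_one ha3]; linarith
    linarith
  -- squares of the square roots
  have hpR : (aPlus a t) ^ 2 = (1 - a ^ 2) - a ^ 2 * t ^ 6 := Real.sq_sqrt hA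
  have hmR : (aMinus a t) ^ 2 = a ^ 2 / t ^ 6 - (1 - a ^ 2) := Real.sq_sqrt hB
  have hp : ((aPlus a t : ℝ) : ℂ) ^ 2 = (1 - (a:ℂ) ^ 2) - (a:ℂ) ^ 2 * (t:ℂ) ^ 6 := by
    have h := congrArg (fun x : ℝ => (x : ℂ)) hpR
    push_cast at h
    linear_combination h
  have hm : ((aMinus a t : ℝ) : ℂ) ^ 2 * (t:ℂ) ^ 6
      = (a:ℂ) ^ 2 - (1 - (a:ℂ) ^ 2) * (t:ℂ) ^ 6 := by
    have htR : (t:ℝ) ^ 6 ≠ 0 := ht6.ne'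
    have : (aMinus a t) ^ 2 * t ^ 6 = a ^ 2 - (1 - a ^ 2) * t ^ 6 := by
      rw [hmR]; field_simp
    have h := congrArg (fun x : ℝ => (x : ℂ)) this
    push_cast at h
    linear_combination h
  -- nonvanishing facts in ℂ
  have htC : (t:ℂ) ≠ 0 := by exact_mod_cast ht0.ne'
  have h1C : (1:ℂ) - (t:ℂ) ^ 6 ≠ 0 := by
    have : ((1 - t ^ 6 : ℝ) : ℂ) ≠ 0 := by
      exact_mod_cast (by linarith : (0:ℝ) < 1 - t ^ 6).ne'
    push_cast at this; exact this
  have h2C : (1:ℂ) + (t:ℂ) ^ 6 ≠ 0 := by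
    have : ((1 + t ^ 6 : ℝ) : ℂ) ≠ 0 := by
      exact_mod_cast (by linarith : (0:ℝ) < 1 + t ^ 6).ne'
    push_cast at this; exact this
  have haC : (1:ℂ) - (a:ℂ) ^ 2 ≠ 0 := by
    have : ((1 - a ^ 2 : ℝ) : ℂ) ≠ 0 := by exact_mod_cast ha3.ne'
    push_cast at this; exact this
  constructor
  · rw [Cparam, zparam]
    push_cast
    linear_combination main1 (a:ℂ) (t:ℂ) (aPlus a t : ℂ) (aMinus a t : ℂ) hp hm htC h1C h2C haC
  · rw [Cparam, zparam]
    push_cast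
    linear_combination main2 (a:ℂ) (t:ℂ) (aPlus a t : ℂ) (aMinus a t : ℂ) hp hm htC h1C h2C haC
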